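/- Let n ≥ 2 and let D be a polynomial in the n−1 complex variables z_2, …, z_n such that for every (w_1, …, w_n) ∈ ℂ^n with w_1 + … + w_n = 0 one has D(e_2(w), …, e_n(w)) = ∏_{1≤i<j≤n}(w_i − w_j)², where e_i denotes the i-th elementary symmetric polynomial. Let V^C = {z ∈ ℂ^{n−1} : D(z) ≠ 0}. Then the map F_n^0 → V^C sending w = (w_1, …, w_n) to (e_2(w), …, e_n(w)) is invariant under the permutation action of the symmetric group 𝔖_n on F_n^0 and descends to a homeomorphism from the quotient space C_n^0 = F_n^0/𝔖_n (with the quotient topology) onto V^C. -/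

import Mathlib

private lemma aux_esymm_one (s : Multiset ℂ) : s.esymm 1 = s.sum := by
  simp [Multiset.esymm, Multiset.powersetCard_one, Multiset.map_map, Function.comp_def]

private lemma aux_esymm_zero (s : Multiset ℂ) : s.esymm 0 = 1 := by
  simp [Multiset.esymm]

private lemma aux_esymm_large {s : Multiset ℂ} {k : ℕ} (h : Multiset.card s < k) :
    s.esymm k = 0 := by
  simp [Multiset.esymm, Multiset.powersetCard_eq_empty _ h]

open Polynomial in
private lemma aux_natDegree (M : Multiset ℂ) :
    ((M.map fun a => X - C a).prod).natDegree = Multiset.card M := by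
  rw [Polynomial.natDegree_multiset_prod_of_monic]
  · simp [Multiset.map_map, Function.comp_def]
  · intro f hf
    obtain ⟨a, _, rfl⟩ := Multiset.mem_map.1 hf
    exact monic_X_sub_C a

private lemma aux_multiset_eq {M M' : Multiset ℂ} (hc : Multiset.card M = Multiset.card M')
    (h : ∀ k, M.esymm k = M'.esymm k) : M = M' := by
  have hpoly : (M.map fun a => Polynomial.X - Polynomial.C a).prod
      = (M'.map fun a => Polynomial.X - Polynomial.C a).prod := by
    ext k
    by_cases hk : k ≤ Multiset.card M
    · rw [Multiset.prod_X_sub_C_coeff M hk, Multiset.prod_X_sub_C_coeff M' (hc ▸ hk), hc, h]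
    · push_neg at hk
      rw [Polynomial.coeff_eq_zero_of_natDegree_lt (by rw [aux_natDegree]; exact hk),
        Polynomial.coeff_eq_zero_of_natDegree_lt (by rw [aux_natDegree]; exact hc ▸ hk)]
  have := congrArg Polynomial.roots hpoly
  rwa [Polynomial.roots_multiset_prod_X_sub_C, Polynomial.roots_multiset_prod_X_sub_C] at this

private lemma aux_map_perm {n : ℕ} (σ : Equiv.Perm (Fin n)) (w : Fin n → ℂ) :
    Multiset.map (w ∘ σ) (Finset.univ : Finset (Fin n)).val = Multiset.map w Finset.univ.val := by
  rw [← Multiset.map_map]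
  congr 1
  have h := Finset.map_univ_equiv σ
  have := congrArg Finset.val h
  simpa using this

private lemma aux_exists_perm {n : ℕ} {w w' : Fin n → ℂ} (hw : Function.Injective w)
    (hw' : Function.Injective w')
    (h : Multiset.map w Finset.univ.val = Multiset.map w' Finset.univ.val) :
    ∃ σ : Equiv.Perm (Fin n), w ∘ σ = w' := by
  have key : ∀ x : ℂ, x ∈ Set.range w' → x ∈ Set.range w := by
    intro x hx
    obtain ⟨i, hi⟩ := hx
    have : x ∈ Multiset.map w' Finset.univ.val :=
      Multiset.mem_map.2 ⟨i, Finset.mem_univ i, hi⟩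
    rw [← h] at this
    obtain ⟨j, _, hj⟩ := Multiset.mem_map.1 this
    exact ⟨j, hj⟩
  have key' : ∀ x : ℂ, x ∈ Set.range w → x ∈ Set.range w' := by
    intro x hx
    obtain ⟨i, hi⟩ := hx
    have : x ∈ Multiset.map w Finset.univ.val :=
      Multiset.mem_map.2 ⟨i, Finset.mem_univ i, hi⟩
    rw [h] at this
    obtain ⟨j, _, hj⟩ := Multiset.mem_map.1 this
    exact ⟨j, hj⟩
  have hr : Set.range w' = Set.range w := Set.Subset.antisymm key key'
  refine ⟨(Equiv.ofInjective w' hw').trans ((Equiv.setCongr hr).trans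
    (Equiv.ofInjective w hw).symm), ?_⟩
  funext i
  show w ((Equiv.ofInjective w hw).symm (Equiv.setCongr hr (Equiv.ofInjective w' hw' i))) = w' i
  rw [Equiv.apply_ofInjective_symm hw]
  rfl

open Polynomial in
private lemma aux_exists_roots {n : ℕ} (hn : 2 ≤ n) (z : Fin (n-1) → ℂ) :
    ∃ w : Fin n → ℂ, (∑ j, w j = 0) ∧
      ∀ i : Fin (n-1), (Multiset.map w Finset.univ.val).esymm ((i:ℕ)+2) = z i := by
  classical
  set q : ℂ[X] := X ^ n + ∑ i : Fin (n-1), C ((-1) ^ ((i:ℕ)+2) * z i) * X ^ (n - ((i:ℕ)+2))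
    with hq_def
  have hterm_deg : ∀ i : Fin (n-1),
      (C ((-1) ^ ((i:ℕ)+2) * z i) * X ^ (n - ((i:ℕ)+2)) : ℂ[X]).degree < n := by
    intro i
    have hi := i.isLt
    have hlt : n - ((i:ℕ)+2) < n := by omega
    calc (C ((-1) ^ ((i:ℕ)+2) * z i) * X ^ (n - ((i:ℕ)+2)) : ℂ[X]).degree
        ≤ (n - ((i:ℕ)+2) : ℕ) := degree_C_mul_X_pow_le _ _
      _ < (n : ℕ) := Nat.cast_lt.2 hlt
  have hsum_deg : (∑ i : Fin (n-1), C ((-1) ^ ((i:ℕ)+2) * z i) * X ^ (n - ((i:ℕ)+2)) : ℂ[X]).degree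
      < n := lt_of_le_of_lt (degree_sum_le _ _) (by
        rw [Finset.sup_lt_iff (by exact_mod_cast WithBot.bot_lt_coe (n:ℕ))]
        exact fun i _ => hterm_deg i)
  have hmonic : q.Monic := monic_X_pow_add (by exact_mod_cast hsum_deg)
  have hndeg : q.natDegree = n := by
    have : q.degree = n := by
      rw [hq_def, degree_add_eq_left_of_degree_lt (by simpa using hsum_deg), degree_X_pow]
    exact natDegree_eq_of_degree_eq_some this
  have hcoeff : ∀ k, k < n → q.coeff k =
      if h : 2 ≤ n - k then (-1) ^ (n - k) * z ⟨n - k - 2, by omega⟩ else 0 := by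
    intro k hk
    conv_lhs => rw [hq_def]
    rw [coeff_add, coeff_X_pow, if_neg (by omega), zero_add, finset_sum_coeff]
    simp only [coeff_C_mul, coeff_X_pow]
    by_cases h : 2 ≤ n - k
    · have hk2 : n - k - 2 < n - 1 := by omega
      have e1 : k = n - (n - k - 2 + 2) := by omega
      have e2 : n - k - 2 + 2 = n - k := by omega
      rw [dif_pos h, Finset.sum_eq_single (⟨n - k - 2, hk2⟩ : Fin (n-1))]
      · simp only [Fin.val_mk]
        rw [if_pos e1, mul_one, e2]
      · intro b _ hb
        rw [if_neg, mul_zero]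
        intro hbk
        apply hb
        have hbl := b.isLt
        apply Fin.ext
        simp only [Fin.val_mk]
        omega
      · intro h'; exact absurd (Finset.mem_univ _) h'
    · rw [dif_neg h]
      apply Finset.sum_eq_zero
      intro b _
      rw [if_neg, mul_zero]
      have hbl := b.isLt
      omega
  set s := q.roots with hs_def
  have hcard : Multiset.card s = n := by
    rw [hs_def, ← hndeg]
    exact (splits_iff_card_roots.1 (IsAlgClosed.splits q))
  have hq_prod : q = (s.map fun a => X - C a).prod :=
    (IsAlgClosed.splits q).eq_prod_roots_of_monic hmonic
  have hesymm : ∀ m, 1 ≤ m → m ≤ n → (-1 : ℂ) ^ m * s.esymm m = q.coeff (n - m) := by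
    intro m h1 h2
    have e3 : n - (n - m) = m := by omega
    have e4 : n - m ≤ Multiset.card s := by omega
    rw [hq_prod, Multiset.prod_X_sub_C_coeff s e4, hcard, e3]
  have hneg : (-1 : ℂ) ≠ 0 := neg_ne_zero.2 one_ne_zero
  have hesymm1 : s.esymm 1 = 0 := by
    have h0 := hesymm 1 le_rfl (by omega)
    rw [hcoeff (n-1) (by omega), dif_neg (by omega)] at h0
    have := mul_eq_zero.1 h0
    simpa [pow_ne_zero 1 hneg] using this
  have hesymm2 : ∀ i : Fin (n-1), s.esymm ((i:ℕ)+2) = z i := by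
    intro i
    have hi := i.isLt
    have h0 := hesymm ((i:ℕ)+2) (by omega) (by omega)
    rw [hcoeff (n - ((i:ℕ)+2)) (by omega), dif_pos (by omega)] at h0
    have hz : z ⟨n - (n - ((i:ℕ)+2)) - 2, by omega⟩ = z i := by
      congr 1
      apply Fin.ext
      simp only [Fin.val_mk]
      omega
    rw [hz] at h0
    have he : n - (n - ((i:ℕ)+2)) = (i:ℕ)+2 := by omega
    rw [he] at h0
    exact mul_left_cancel₀ (pow_ne_zero _ hneg) h0
  set l := s.toList with hl_def
  have hl : l.length = n := by rw [hl_def, Multiset.length_toList, hcard]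
  set w : Fin n → ℂ := fun i => l.get (Fin.cast hl.symm i) with hw_def
  have hM : Multiset.map w Finset.univ.val = s := by
    rw [Fin.univ_val_map]
    have : List.ofFn w = l := by
      rw [hw_def, ← List.ofFn_congr hl l.get, List.ofFn_get]
    rw [this, hl_def, Multiset.coe_toList]
  refine ⟨w, ?_, ?_⟩
  · have h0 : ∑ j, w j = (Multiset.map w Finset.univ.val).sum := rfl
    rw [h0, hM, ← aux_esymm_one, hesymm1]
  · intro i
    rw [hM, hesymm2]

/-- The map `F_n^0 → V^C` sending `w` to `(e_2(w), …, e_n(w))` is invariant under the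
permutation action of the symmetric group on `F_n^0` and descends to a homeomorphism from the
quotient `C_n^0 = F_n^0/𝔖_n` (with the quotient topology) onto
`V^C = {z ∈ ℂ^{n−1} : D(z) ≠ 0}`. -/
theorem Cn0_homeomorphic_to_VC
    (n : ℕ) (hn : 2 ≤ n)
    (E : (Fin n → ℂ) → ℕ → ℂ)
    (hE : ∀ (w : Fin n → ℂ) (k : ℕ),
        E w k = ∑ t ∈ Finset.powersetCard k (Finset.univ : Finset (Fin n)), ∏ j ∈ t, w j)
    (D : MvPolynomial (Fin (n - 1)) ℂ)
    (hD : ∀ w : Fin n → ℂ, ∑ j, w j = 0 →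
        MvPolynomial.eval (fun i : Fin (n - 1) => E w ((i : ℕ) + 2)) D =
          ∏ p ∈ Finset.univ.filter (fun p : Fin n × Fin n => p.1 < p.2),
            (w p.1 - w p.2) ^ 2) :
    (∀ (σ : Equiv.Perm (Fin n)) (w : Fin n → ℂ), Function.Injective w → ∑ j, w j = 0 →
        (fun i : Fin (n - 1) => E (w ∘ σ) ((i : ℕ) + 2)) =
          fun i : Fin (n - 1) => E w ((i : ℕ) + 2)) ∧
    ∃ e : Quot (fun w w' : {w : Fin n → ℂ // Function.Injective w ∧ ∑ j, w j = 0} =>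
            ∃ σ : Equiv.Perm (Fin n), w.1 ∘ σ = w'.1) ≃ₜ
          {z : Fin (n - 1) → ℂ // MvPolynomial.eval z D ≠ 0},
      ∀ w : {w : Fin n → ℂ // Function.Injective w ∧ ∑ j, w j = 0},
        (e (Quot.mk _ w) : Fin (n - 1) → ℂ) = fun i : Fin (n - 1) => E w.1 ((i : ℕ) + 2) := by
  classical
  have hE' : ∀ (w : Fin n → ℂ) (k : ℕ),
      E w k = (Multiset.map w Finset.univ.val).esymm k := by
    intro w k
    rw [hE, Finset.esymm_map_val]
  have hcardM : ∀ w : Fin n → ℂ, Multiset.card (Multiset.map w Finset.univ.val) = n := by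
    intro w
    simp
  refine ⟨?_, ?_⟩
  · intro σ w _ _
    funext i
    rw [hE', hE', aux_map_perm]
  -- abbreviations
  have hFcont : Continuous (fun w : Fin n → ℂ => fun i : Fin (n-1) => E w ((i:ℕ)+2)) := by
    apply continuous_pi
    intro i
    have h0 : (fun w : Fin n → ℂ => E w ((i:ℕ)+2)) =
        fun w => ∑ t ∈ Finset.powersetCard ((i:ℕ)+2) (Finset.univ : Finset (Fin n)),
          ∏ j ∈ t, w j := funext fun w => hE w _
    rw [h0]
    exact continuous_finset_sum _ fun t _ =>
      continuous_finset_prod _ fun j _ => continuous_apply j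
  have hprod_ne : ∀ w : Fin n → ℂ, Function.Injective w →
      (∏ p ∈ Finset.univ.filter (fun p : Fin n × Fin n => p.1 < p.2),
        (w p.1 - w p.2) ^ 2) ≠ 0 := by
    intro w hw
    apply Finset.prod_ne_zero_iff.2
    intro p hp
    have hne : p.1 ≠ p.2 := ((Finset.mem_filter.1 hp).2).ne
    exact pow_ne_zero _ (sub_ne_zero.2 fun h => hne (hw h))
  have hinj_of : ∀ w : Fin n → ℂ,
      (∏ p ∈ Finset.univ.filter (fun p : Fin n × Fin n => p.1 < p.2),
        (w p.1 - w p.2) ^ 2) ≠ 0 → Function.Injective w := by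
    intro w h a b hab
    by_contra hne
    rcases lt_or_gt_of_ne hne with hlt | hlt
    · exact h (Finset.prod_eq_zero (Finset.mem_filter.2 ⟨Finset.mem_univ (a, b), hlt⟩)
        (by show (w a - w b) ^ 2 = 0; rw [hab, sub_self]; exact zero_pow two_ne_zero))
    · exact h (Finset.prod_eq_zero (Finset.mem_filter.2 ⟨Finset.mem_univ (b, a), hlt⟩)
        (by show (w b - w a) ^ 2 = 0; rw [hab, sub_self]; exact zero_pow two_ne_zero))
  -- the map f
  let f : {w : Fin n → ℂ // Function.Injective w ∧ ∑ j, w j = 0} →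
      {z : Fin (n - 1) → ℂ // MvPolynomial.eval z D ≠ 0} :=
    fun w => ⟨fun i : Fin (n-1) => E w.1 ((i:ℕ)+2), by
      rw [hD w.1 w.2.2]
      exact hprod_ne w.1 w.2.1⟩
  have hfc : Continuous f := (hFcont.comp continuous_subtype_val).subtype_mk _
  have hresp : ∀ a b : {w : Fin n → ℂ // Function.Injective w ∧ ∑ j, w j = 0},
      (∃ σ : Equiv.Perm (Fin n), a.1 ∘ σ = b.1) → f a = f b := by
    rintro a b ⟨σ, hσ⟩
    apply Subtype.ext
    funext i
    show E a.1 _ = E b.1 _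
    rw [hE', hE', ← hσ, aux_map_perm]
  let g := Quot.lift f hresp
  -- injectivity
  have hginj : Function.Injective g := by
    intro a b
    refine Quot.induction_on₂ a b ?_
    intro wa wb hab
    apply Quot.sound
    have hab' : f wa = f wb := hab
    have hF : (fun i : Fin (n-1) => E wa.1 ((i:ℕ)+2)) = fun i : Fin (n-1) => E wb.1 ((i:ℕ)+2) :=
      congrArg Subtype.val hab'
    have hM : Multiset.map wa.1 Finset.univ.val = Multiset.map wb.1 Finset.univ.val := by
      apply aux_multiset_eq (by rw [hcardM, hcardM])
      intro k
      rcases Nat.lt_or_ge k 1 with hk | hk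
      · interval_cases k
        rw [aux_esymm_zero, aux_esymm_zero]
      rcases Nat.lt_or_ge k 2 with hk2 | hk2
      · interval_cases k
        rw [aux_esymm_one, aux_esymm_one]
        have h1 : (Multiset.map wa.1 Finset.univ.val).sum = ∑ j, wa.1 j := rfl
        have h2 : (Multiset.map wb.1 Finset.univ.val).sum = ∑ j, wb.1 j := rfl
        rw [h1, h2, wa.2.2, wb.2.2]
      rcases Nat.lt_or_ge n k with hk3 | hk3
      · rw [aux_esymm_large (by rw [hcardM]; exact hk3),
          aux_esymm_large (by rw [hcardM]; exact hk3)]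
      · have hik : k - 2 < n - 1 := by omega
        have := congrFun hF ⟨k - 2, hik⟩
        simp only [Fin.val_mk] at this
        have he : k - 2 + 2 = k := by omega
        rw [← hE' wa.1 k, ← hE' wb.1 k]
        rwa [he] at this
    exact aux_exists_perm wa.2.1 wb.2.1 hM
  -- surjectivity
  have hgsurj : Function.Surjective g := by
    intro v
    obtain ⟨w, hsum, hes⟩ := aux_exists_roots hn v.1
    have hFw : (fun i : Fin (n-1) => E w ((i:ℕ)+2)) = v.1 := funext fun i => by
      rw [hE', hes]
    have hinj : Function.Injective w := by
      apply hinj_of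
      rw [← hD w hsum, hFw]
      exact v.2
    have hfv : f ⟨w, hinj, hsum⟩ = v := Subtype.ext hFw
    exact ⟨Quot.mk _ ⟨w, hinj, hsum⟩, hfv⟩
  -- properness
  have hproper : ∀ K : Set {z : Fin (n - 1) → ℂ // MvPolynomial.eval z D ≠ 0},
      IsCompact K → IsCompact (f ⁻¹' K) := by
    intro K hK
    set K' : Set (Fin (n-1) → ℂ) := Subtype.val '' K with hK'_def
    have hK'c : IsCompact K' := hK.image continuous_subtype_val
    obtain ⟨Cb, hCb⟩ := isBounded_iff_forall_norm_le.1 hK'c.isBounded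
    set CN : NNReal := Cb.toNNReal with hCN_def
    set A : Set (Fin n → ℂ) :=
      {w | (∑ j, w j = 0) ∧ (fun i : Fin (n-1) => E w ((i:ℕ)+2)) ∈ K'} with hA_def
    have hAclosed : IsClosed A := by
      have h1 : IsClosed {w : Fin n → ℂ | ∑ j, w j = 0} :=
        isClosed_eq (continuous_finset_sum _ fun j _ => continuous_apply j) continuous_const
      exact h1.inter (hK'c.isClosed.preimage hFcont)
    -- boundedness via Cauchy bound
    have hAbound : ∀ w ∈ A, ∀ j, ‖w j‖₊ < 1 ⊔ CN + 1 := by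
      intro w hw j
      simp only [hA_def, Set.mem_setOf_eq] at hw
      obtain ⟨hw1, hw2⟩ := hw
      set M := Multiset.map w Finset.univ.val with hM_def
      have hcM : Multiset.card M = n := hcardM w
      set p : Polynomial ℂ := (M.map fun a => Polynomial.X - Polynomial.C a).prod with hp_def
      have hpm : p.Monic :=
        Polynomial.monic_multiset_prod_of_monic _ _ fun a _ => Polynomial.monic_X_sub_C a
      have hproot : p.IsRoot (w j) := by
        rw [Polynomial.IsRoot.def, hp_def, Polynomial.eval_multiset_prod]
        apply Multiset.prod_eq_zero
        rw [Multiset.map_map]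
        refine Multiset.mem_map.2 ⟨w j, ?_, by simp⟩
        exact Multiset.mem_map.2 ⟨j, Finset.mem_univ j, rfl⟩
      have hb := Polynomial.IsRoot.norm_lt_cauchyBound hpm.ne_zero hproot
      have hnd : p.natDegree = n := by rw [hp_def, aux_natDegree, hcM]
      have hbound : Polynomial.cauchyBound p ≤ 1 ⊔ CN + 1 := by
        rw [Polynomial.cauchyBound, hpm.leadingCoeff, nnnorm_one, div_one]
        apply add_le_add_left
        apply Finset.sup_le
        intro k hk
        rw [Finset.mem_range, hnd] at hk
        have hkc : k ≤ Multiset.card M := by omega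
        rw [hp_def, Multiset.prod_X_sub_C_coeff M hkc, hcM]
        have hnorm : ‖(-1 : ℂ) ^ (n - k) * M.esymm (n - k)‖₊ = ‖M.esymm (n - k)‖₊ := by
          rw [nnnorm_mul]
          norm_num
        rw [hnorm]
        rcases Nat.lt_or_ge (n - k) 2 with hm | hm
        · have hm1 : n - k = 1 := by omega
          rw [hm1, aux_esymm_one]
          have h1 : M.sum = ∑ j' : Fin n, w j' := rfl
          rw [h1, hw1]
          simp
        · have hik : n - k - 2 < n - 1 := by omega
          have he : (n - k - 2) + 2 = n - k := by omega
          have hes : M.esymm (n - k) = E w (n - k) := (hE' w (n - k)).symm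
          rw [hes, ← he]
          have hle2 : ‖E w (n - k - 2 + 2)‖ ≤ Cb :=
            le_trans (norm_le_pi_norm (fun i : Fin (n-1) => E w ((i:ℕ)+2))
              ⟨n - k - 2, hik⟩) (hCb _ hw2)
          have hle3 : ‖E w (n - k - 2 + 2)‖₊ ≤ CN := by
            rw [hCN_def, ← norm_toNNReal]
            exact Real.toNNReal_le_toNNReal hle2
          exact le_trans hle3 le_sup_right
      exact lt_of_lt_of_le hb hbound
    have hAcompact : IsCompact A := by
      apply Metric.isCompact_of_isClosed_isBounded hAclosed
      apply (Metric.isBounded_closedBall (x := (0 : Fin n → ℂ))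
        (r := ((1 ⊔ CN + 1 : NNReal) : ℝ))).subset
      intro w hw
      rw [Metric.mem_closedBall, dist_zero_right]
      refine (pi_norm_le_iff_of_nonneg (by positivity)).2 fun j => ?_
      have := (hAbound w hw j).le
      exact_mod_cast this
    have hpre : f ⁻¹' K = Subtype.val ⁻¹' A := by
      ext w
      simp only [Set.mem_preimage, hA_def, Set.mem_setOf_eq]
      constructor
      · intro hfw
        exact ⟨w.2.2, ⟨f w, hfw, rfl⟩⟩
      · rintro ⟨-, v, hv, hvw⟩
        have : f w = v := Subtype.ext hvw.symm
        rw [this]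
        exact hv
    rw [hpre]
    refine (Topology.IsEmbedding.subtypeVal.isCompact_iff).2 ?_
    have himg : (Subtype.val : {w : Fin n → ℂ // Function.Injective w ∧ ∑ j, w j = 0} →
        (Fin n → ℂ)) '' (Subtype.val ⁻¹' A) = A := by
      apply Set.image_preimage_eq_of_subset
      intro w hw
      rw [Subtype.range_coe_subtype]
      have hni : MvPolynomial.eval (fun i : Fin (n-1) => E w ((i:ℕ)+2)) D ≠ 0 := by
        obtain ⟨v, _, hv⟩ := hw.2
        rw [← hv]
        exact v.2
      have hinj : Function.Injective w := by
        apply hinj_of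
        rw [← hD w hw.1]
        exact hni
      exact ⟨hinj, hw.1⟩
    rw [himg]
    exact hAcompact
  have hfproper : IsProperMap f := isProperMap_iff_isCompact_preimage.2 ⟨hfc, hproper⟩
  -- the quotient map g is bijective, continuous and closed
  have hgcont : Continuous g := continuous_quot_lift hresp hfc
  have hgclosed : IsClosedMap g := by
    intro C hC
    have himg : g '' C = f '' (Quot.mk _ ⁻¹' C) := by
      ext v
      constructor
      · rintro ⟨c, hc, rfl⟩
        obtain ⟨w, rfl⟩ := Quot.exists_rep c
        exact ⟨w, hc, rfl⟩
      · rintro ⟨w, hw, rfl⟩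
        exact ⟨Quot.mk _ w, hw, rfl⟩
    rw [himg]
    exact hfproper.isClosedMap _ (hC.preimage continuous_quot_mk)
  let eqv := Equiv.ofBijective g ⟨hginj, hgsurj⟩
  have hsymm_cont : Continuous eqv.symm := by
    rw [continuous_iff_isClosed]
    intro C hC
    have h0 : eqv.symm ⁻¹' C = g '' C := (Equiv.image_eq_preimage_symm eqv C).symm
    rw [h0]
    exact hgclosed C hC
  refine ⟨⟨eqv, hgcont, hsymm_cont⟩, fun w => ?_⟩
  have h1 : (Homeomorph.mk eqv hgcont hsymm_cont) (Quot.mk _ w) = f w := rfl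
  rw [h1]
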